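/- Assume q₂ = u₂ + v₂·i ∈ Z[i]\{0}, r₂ = x₂ + y₂·i ∈ Z[i] with r₂ and q₂ coprime in Z[i], set k = x₂·u₂ + y₂·v₂ and l = x₂·v₂ − y₂·u₂, and let u, v, ũ, ṽ ∈ ℤ. Then the quantity |f((u·k + v·l)/N(q₂)) − f((ũ·k + ṽ·l)/N(q₂))|² + |f((−v·k + u·l)/N(q₂)) − f((−ṽ·k + ũ·l)/N(q₂))|² is at least 1/N(q₂) if q₂ does not divide (u−ũ) + (v−ṽ)·i in Z[i], and equals 0 if q₂ divides (u−ũ) + (v−ṽ)·i in Z[i]. -/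

import Mathlib

noncomputable section

def GCoprime (r q : GaussianInt) : Prop :=
  ∀ d : GaussianInt, d ∣ r → d ∣ q → IsUnit d

def ffrac (z : ℝ) : ℝ := Int.fract (z + 1 / 2) - 1 / 2

lemma ffrac_eq (z : ℝ) : ffrac z = z - ⌊z + 1/2⌋ := by
  rw [ffrac, Int.fract]; ring

lemma ffrac_add_int (z : ℝ) (n : ℤ) : ffrac (z + n) = ffrac z := by
  unfold ffrac
  rw [show z + n + 1/2 = z + 1/2 + n by ring, Int.fract_add_intCast]

lemma ffrac_sub_int (x y : ℝ) : ∃ m : ℤ, ffrac x - ffrac y = (x - y) - m := by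
  exact ⟨⌊x + 1/2⌋ - ⌊y + 1/2⌋, by rw [ffrac_eq, ffrac_eq]; push_cast; ring⟩

lemma gcoprime_isCoprime {r q : GaussianInt}
    (h : GCoprime r q) : IsCoprime r q := by
  obtain ⟨u, hu⟩ := h _ (EuclideanDomain.gcd_dvd_left r q) (EuclideanDomain.gcd_dvd_right r q)
  have hg := EuclideanDomain.gcd_eq_gcd_ab r q
  refine ⟨(↑u⁻¹ : GaussianInt) * EuclideanDomain.gcdA r q,
          (↑u⁻¹ : GaussianInt) * EuclideanDomain.gcdB r q, ?_⟩
  have h1 : (↑u⁻¹ : GaussianInt) * ↑u = 1 := by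
    rw [← Units.val_mul, inv_mul_cancel, Units.val_one]
  rw [hu, hg] at h1
  linear_combination h1

theorem spacing_lemma (u₂ v₂ x₂ y₂ u v ut vt : ℤ)
    (hq : (⟨u₂, v₂⟩ : GaussianInt) ≠ 0)
    (hcop : GCoprime ⟨x₂, y₂⟩ ⟨u₂, v₂⟩)
    (k l : ℤ) (hk : k = x₂ * u₂ + y₂ * v₂) (hl : l = x₂ * v₂ - y₂ * u₂)
    (Nq : ℝ) (hNq : Nq = (Zsqrtd.norm (⟨u₂, v₂⟩ : GaussianInt) : ℝ)) :
    (¬ ((⟨u₂, v₂⟩ : GaussianInt) ∣ ⟨u - ut, v - vt⟩) →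
      1 / Nq ≤
        |ffrac (((u * k + v * l : ℤ) : ℝ) / Nq) - ffrac (((ut * k + vt * l : ℤ) : ℝ) / Nq)| ^ 2 +
        |ffrac (((-v * k + u * l : ℤ) : ℝ) / Nq) - ffrac (((-vt * k + ut * l : ℤ) : ℝ) / Nq)| ^ 2) ∧
    (((⟨u₂, v₂⟩ : GaussianInt) ∣ ⟨u - ut, v - vt⟩) →
      |ffrac (((u * k + v * l : ℤ) : ℝ) / Nq) - ffrac (((ut * k + vt * l : ℤ) : ℝ) / Nq)| ^ 2 +
      |ffrac (((-v * k + u * l : ℤ) : ℝ) / Nq) - ffrac (((-vt * k + ut * l : ℤ) : ℝ) / Nq)| ^ 2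
        = 0) := by
  have hq' : u₂ ≠ 0 ∨ v₂ ≠ 0 := by
    by_contra h
    push_neg at h
    exact hq (Zsqrtd.ext_iff.mpr (by simp [h.1, h.2]))
  have hNpos : (0:ℤ) < u₂*u₂+v₂*v₂ := by
    rcases hq' with h | h
    · have := mul_self_pos.mpr h; nlinarith [mul_self_nonneg v₂]
    · have := mul_self_pos.mpr h; nlinarith [mul_self_nonneg u₂]
  have hNq' : Nq = ((u₂*u₂+v₂*v₂ : ℤ) : ℝ) := by
    rw [hNq, Zsqrtd.norm_def]; push_cast; ring
  have hNne : Nq ≠ 0 := by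
    rw [hNq']; exact_mod_cast hNpos.ne'
  have hNRpos : (0:ℝ) < Nq := by rw [hNq']; exact_mod_cast hNpos
  constructor
  · -- hard direction
    intro hnd
    obtain ⟨m, hm⟩ := ffrac_sub_int (((u * k + v * l : ℤ) : ℝ) / Nq) (((ut * k + vt * l : ℤ) : ℝ) / Nq)
    obtain ⟨n, hn⟩ := ffrac_sub_int (((-v * k + u * l : ℤ) : ℝ) / Nq) (((-vt * k + ut * l : ℤ) : ℝ) / Nq)
    set A' : ℤ := ((u-ut)*k + (v-vt)*l) - m*(u₂*u₂+v₂*v₂) with hA'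
    set B' : ℤ := (-(v-vt)*k + (u-ut)*l) - n*(u₂*u₂+v₂*v₂) with hB'
    have hd1 : ffrac (((u * k + v * l : ℤ) : ℝ) / Nq) - ffrac (((ut * k + vt * l : ℤ) : ℝ) / Nq)
        = (A' : ℝ)/Nq := by
      rw [hm, eq_div_iff hNne, sub_mul, sub_mul, div_mul_cancel₀ _ hNne,
        div_mul_cancel₀ _ hNne, hA', hNq']
      push_cast
      ring
    have hd2 : ffrac (((-v * k + u * l : ℤ) : ℝ) / Nq) - ffrac (((-vt * k + ut * l : ℤ) : ℝ) / Nq)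
        = (B' : ℝ)/Nq := by
      rw [hn, eq_div_iff hNne, sub_mul, sub_mul, div_mul_cancel₀ _ hNne,
        div_mul_cancel₀ _ hNne, hB', hNq']
      push_cast
      ring
    -- Gaussian integer factorization
    set s₁ : GaussianInt :=
      ⟨((u-ut)*x₂ - (v-vt)*y₂) - (u₂*m + v₂*n), (-((u-ut)*y₂ + (v-vt)*x₂)) - (u₂*n - v₂*m)⟩
      with hs₁
    have hfact : (⟨A', B'⟩ : GaussianInt) = (⟨u₂, v₂⟩ : GaussianInt) * s₁ := by
      rw [Zsqrtd.ext_iff, Zsqrtd.re_mul, Zsqrtd.im_mul, hs₁]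
      constructor
      · show A' = u₂ * _ + (-1) * v₂ * _
        rw [hA', hk, hl]; ring
      · show B' = u₂ * _ + v₂ * _
        rw [hB', hk, hl]; ring
    have hs₁ne : s₁ ≠ 0 := by
      intro h0
      have hre : ((u-ut)*x₂ - (v-vt)*y₂) - (u₂*m + v₂*n) = 0 := by
        have := congrArg Zsqrtd.re h0; simpa [hs₁] using this
      have him : (-((u-ut)*y₂ + (v-vt)*x₂)) - (u₂*n - v₂*m) = 0 := by
        have := congrArg Zsqrtd.im h0; simpa [hs₁] using this
      apply hnd
      have hdvd : (⟨u₂, v₂⟩ : GaussianInt) ∣ ((⟨u-ut, v-vt⟩ : GaussianInt) * ⟨x₂, y₂⟩) := by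
        refine ⟨⟨m, -n⟩, ?_⟩
        rw [Zsqrtd.ext_iff, Zsqrtd.re_mul, Zsqrtd.im_mul, Zsqrtd.re_mul, Zsqrtd.im_mul]
        constructor
        · show (u-ut) * x₂ + (-1) * (v-vt) * y₂ = u₂ * m + (-1) * v₂ * (-n)
          linear_combination hre
        · show (u-ut) * y₂ + (v-vt) * x₂ = u₂ * (-n) + v₂ * m
          linear_combination -him
      exact ((gcoprime_isCoprime hcop).symm).dvd_of_dvd_mul_right hdvd
    have h3 : 1 ≤ Zsqrtd.norm s₁ := by
      have hcomp : s₁.re ≠ 0 ∨ s₁.im ≠ 0 := by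
        by_contra hc; push_neg at hc
        exact hs₁ne (Zsqrtd.ext_iff.mpr ⟨by rw [hc.1]; rfl, by rw [hc.2]; rfl⟩)
      rw [Zsqrtd.norm_def]
      rcases hcomp with h | h
      · nlinarith [mul_self_pos.mpr h, mul_self_nonneg s₁.im]
      · nlinarith [mul_self_pos.mpr h, mul_self_nonneg s₁.re]
    have hnormge : (u₂*u₂+v₂*v₂) ≤ A'^2 + B'^2 := by
      have hmul := Zsqrtd.norm_mul (⟨u₂, v₂⟩ : GaussianInt) s₁
      rw [← hfact] at hmul
      have h1 : Zsqrtd.norm (⟨A', B'⟩ : GaussianInt) = A'*A' + B'*B' := by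
        rw [Zsqrtd.norm_def]; ring
      have h2 : Zsqrtd.norm (⟨u₂, v₂⟩ : GaussianInt) = u₂*u₂ + v₂*v₂ := by
        rw [Zsqrtd.norm_def]; ring
      rw [h1, h2] at hmul
      nlinarith [hmul, hNpos, h3]
    rw [hd1, hd2, sq_abs, sq_abs, div_pow, div_pow, ← add_div,
        div_le_div_iff₀ hNRpos (by positivity)]
    have hcast : ((u₂*u₂+v₂*v₂ : ℤ) : ℝ) ≤ ((A'^2 + B'^2 : ℤ) : ℝ) := by exact_mod_cast hnormge
    rw [hNq'] at *
    push_cast at hcast ⊢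
    nlinarith [hcast, hNpos]
  · rintro ⟨⟨sr, si⟩, hs⟩
    have h1 : u - ut = u₂ * sr - v₂ * si := by
      have := congrArg Zsqrtd.re hs
      rw [Zsqrtd.re_mul] at this
      simpa [sub_eq_add_neg] using this
    have h2 : v - vt = u₂ * si + v₂ * sr := by
      have := congrArg Zsqrtd.im hs
      rw [Zsqrtd.im_mul] at this
      simpa using this
    have e1 : ((u*k + v*l : ℤ) : ℝ)/Nq = ((ut*k + vt*l : ℤ) : ℝ)/Nq + ((sr*x₂ - si*y₂ : ℤ) : ℝ) := by
      have hA : (u*k + v*l : ℤ) = (ut*k+vt*l) + (u₂*u₂+v₂*v₂) * (sr*x₂ - si*y₂) := by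
        rw [hk, hl]
        linear_combination (x₂*u₂+y₂*v₂) * h1 + (x₂*v₂-y₂*u₂) * h2
      have hAr : ((u*k + v*l : ℤ) : ℝ) = ((ut*k+vt*l : ℤ) : ℝ) + Nq * ((sr*x₂ - si*y₂ : ℤ) : ℝ) := by
        rw [hNq']; exact_mod_cast congrArg (Int.cast : ℤ → ℝ) hA
      rw [hAr]
      field_simp
    have e2 : ((-v*k + u*l : ℤ) : ℝ)/Nq = ((-vt*k + ut*l : ℤ) : ℝ)/Nq + ((-(sr*y₂ + si*x₂) : ℤ) : ℝ) := by
      have hB : (-v*k + u*l : ℤ) = (-vt*k+ut*l) + (u₂*u₂+v₂*v₂) * (-(sr*y₂ + si*x₂)) := by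
        rw [hk, hl]
        linear_combination (x₂*v₂-y₂*u₂) * h1 - (x₂*u₂+y₂*v₂) * h2
      have hBr : ((-v*k + u*l : ℤ) : ℝ) = ((-vt*k+ut*l : ℤ) : ℝ) + Nq * ((-(sr*y₂ + si*x₂) : ℤ) : ℝ) := by
        rw [hNq']; exact_mod_cast congrArg (Int.cast : ℤ → ℝ) hB
      rw [hBr]
      field_simp
    rw [e1, e2, ffrac_add_int, ffrac_add_int, sub_self, sub_self, abs_zero]
    norm_num
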